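/- For the pairwise exponential loss over all correctly ordered pairs, if every pair of documents with distinct relevance labels is separated by a partition (i.e., no two documents appearing in a common loss term lie in the same part), then the loss is derivative additive on that partition: the first and second derivatives of the loss in each leaf's output at 0 equal the sums of the corresponding per-document derivatives over that leaf. -/

import Mathlib

open Real

private lemma aux_hasDerivAt {α : Type*} (D : Finset α) (y : α → ℤ)
    (b c w : α → α → ℝ) (x : ℝ) :
    HasDerivAt (fun o => ∑ d₁ ∈ D, ∑ d₂ ∈ D, if y d₁ > y d₂ then
        w d₁ d₂ * Real.exp (b d₁ d₂ + o * c d₁ d₂) else 0)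
      (∑ d₁ ∈ D, ∑ d₂ ∈ D, if y d₁ > y d₂ then
        w d₁ d₂ * c d₁ d₂ * Real.exp (b d₁ d₂ + x * c d₁ d₂) else 0) x := by
  apply HasDerivAt.fun_sum
  intro d₁ _
  apply HasDerivAt.fun_sum
  intro d₂ _
  by_cases h : y d₁ > y d₂
  · simp only [if_pos h]
    have h1 : HasDerivAt (fun o : ℝ => b d₁ d₂ + o * c d₁ d₂) (c d₁ d₂) x := by
      simpa using ((hasDerivAt_id x).mul_const (c d₁ d₂)).const_add (b d₁ d₂)
    have h2 := (h1.exp).const_mul (w d₁ d₂)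
    convert h2 using 1
    · rfl
    ring
  · simp only [if_neg h]
    exact hasDerivAt_const x 0

private lemma side_lemma {α : Type*} [DecidableEq α] (D S : Finset α)
    (f : α → ℝ) (y : α → ℤ) (Lo : Finset α → ℝ → ℝ)
    (hLo : ∀ (T : Finset α) (o : ℝ), Lo T o =
      ∑ d₁ ∈ D, ∑ d₂ ∈ D, if y d₁ > y d₂ then
        Real.exp ((f d₂ + o * (if d₂ ∈ T then 1 else 0))
          - (f d₁ + o * (if d₁ ∈ T then 1 else 0))) else 0)
    (hsep : ∀ d₁ ∈ D, ∀ d₂ ∈ D, y d₁ > y d₂ → ¬(d₁ ∈ S ∧ d₂ ∈ S)) :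
    (deriv (Lo S) 0 = ∑ d ∈ S, deriv (Lo {d}) 0) ∧
    (deriv (deriv (Lo S)) 0 = ∑ d ∈ S, deriv (deriv (Lo {d})) 0) := by
  set c : Finset α → α → α → ℝ :=
    fun T d₁ d₂ => (if d₂ ∈ T then (1:ℝ) else 0) - (if d₁ ∈ T then 1 else 0) with hc
  have hfun : ∀ T : Finset α, Lo T = fun o =>
      ∑ d₁ ∈ D, ∑ d₂ ∈ D, if y d₁ > y d₂ then
        (1:ℝ) * Real.exp ((f d₂ - f d₁) + o * c T d₁ d₂) else 0 := by
    intro T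
    funext o
    rw [hLo]
    refine Finset.sum_congr rfl fun d₁ _ => Finset.sum_congr rfl fun d₂ _ => ?_
    by_cases h : y d₁ > y d₂
    · simp only [if_pos h, one_mul]
      congr 1
      simp only [hc]
      ring
    · simp [h]
  have hd1 : ∀ T : Finset α, deriv (Lo T) = fun x =>
      ∑ d₁ ∈ D, ∑ d₂ ∈ D, if y d₁ > y d₂ then
        c T d₁ d₂ * Real.exp ((f d₂ - f d₁) + x * c T d₁ d₂) else 0 := by
    intro T
    funext x
    rw [hfun T]
    refine ((aux_hasDerivAt D y (fun d₁ d₂ => f d₂ - f d₁) (c T) (fun _ _ => 1) x).deriv).trans ?_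
    simp
  have hd2 : ∀ T : Finset α, deriv (deriv (Lo T)) 0 =
      ∑ d₁ ∈ D, ∑ d₂ ∈ D, if y d₁ > y d₂ then
        c T d₁ d₂ * c T d₁ d₂ * Real.exp ((f d₂ - f d₁) + 0 * c T d₁ d₂) else 0 := by
    intro T
    rw [hd1 T]
    exact (aux_hasDerivAt D y (fun d₁ d₂ => f d₂ - f d₁) (c T) (c T) 0).deriv
  constructor
  · rw [hd1 S]
    simp only [hd1]
    simp only [zero_mul, add_zero]
    conv_rhs => rw [Finset.sum_comm]
    refine Finset.sum_congr rfl fun d₁ _ => ?_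
    conv_rhs => rw [Finset.sum_comm]
    refine Finset.sum_congr rfl fun d₂ _ => ?_
    by_cases h : y d₁ > y d₂
    · simp only [if_pos h, hc, Finset.mem_singleton, sub_mul, one_mul, zero_mul,
        ite_mul, Finset.sum_sub_distrib, Finset.sum_ite_eq]
    · simp [h]
  · rw [hd2 S]
    simp only [hd2]
    simp only [zero_mul, add_zero]
    conv_rhs => rw [Finset.sum_comm]
    refine Finset.sum_congr rfl fun d₁ hd₁ => ?_
    conv_rhs => rw [Finset.sum_comm]
    refine Finset.sum_congr rfl fun d₂ hd₂ => ?_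
    by_cases h : y d₁ > y d₂
    · have hne : d₁ ≠ d₂ := by
        intro e; rw [e] at h; exact lt_irrefl _ h
      have hns := hsep d₁ hd₁ d₂ hd₂ h
      simp only [if_pos h]
      have hL : ∀ d ∈ S, c {d} d₁ d₂ * c {d} d₁ d₂ * Real.exp (f d₂ - f d₁) =
          (if d₂ = d then Real.exp (f d₂ - f d₁) else 0) +
          (if d₁ = d then Real.exp (f d₂ - f d₁) else 0) := by
        intro d _
        simp only [hc, Finset.mem_singleton]
        by_cases h2 : d₂ = d
        · by_cases h1 : d₁ = d
          · exact absurd (h1.trans h2.symm) hne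
          · simp [h1, h2]
        · by_cases h1 : d₁ = d
          · simp [h1, h2]
          · simp [h1, h2]
      rw [Finset.sum_congr rfl hL, Finset.sum_add_distrib, Finset.sum_ite_eq,
        Finset.sum_ite_eq]
      by_cases hS1 : d₁ ∈ S
      · by_cases hS2 : d₂ ∈ S
        · exact absurd ⟨hS1, hS2⟩ hns
        · simp [hc, hS1, hS2]
      · by_cases hS2 : d₂ ∈ S <;> simp [hc, hS1, hS2]
    · simp [h]

open Real in
/-- If a partition separates every correctly ordered pair of the pairwise
exponential loss, then the loss is derivative additive on that partition:
for each leaf, the first and second derivatives in the leaf's output at `0`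
equal the sums of the per-document derivatives (per-document derivatives are
those of the loss in an offset added to that document's score alone). -/
theorem pairwise_exp_loss_derivative_additive_of_separating
    {α : Type*} [DecidableEq α] (D Dl Dr : Finset α)
    (hDl : Dl.Nonempty) (hDr : Dr.Nonempty) (hdisj : Disjoint Dl Dr)
    (hunion : D = Dl ∪ Dr) (f : α → ℝ) (y : α → ℤ)
    (Lo : Finset α → ℝ → ℝ)
    (hLo : ∀ (S : Finset α) (o : ℝ), Lo S o =
      ∑ d₁ ∈ D, ∑ d₂ ∈ D, if y d₁ > y d₂ then
        exp ((f d₂ + o * (if d₂ ∈ S then 1 else 0))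
          - (f d₁ + o * (if d₁ ∈ S then 1 else 0))) else 0)
    (hsep : ∀ d₁ ∈ D, ∀ d₂ ∈ D, y d₁ > y d₂ →
      ¬(d₁ ∈ Dl ∧ d₂ ∈ Dl) ∧ ¬(d₁ ∈ Dr ∧ d₂ ∈ Dr)) :
    (deriv (Lo Dl) 0 = ∑ d ∈ Dl, deriv (Lo {d}) 0) ∧
    (deriv (deriv (Lo Dl)) 0 = ∑ d ∈ Dl, deriv (deriv (Lo {d})) 0) ∧
    (deriv (Lo Dr) 0 = ∑ d ∈ Dr, deriv (Lo {d}) 0) ∧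
    (deriv (deriv (Lo Dr)) 0 = ∑ d ∈ Dr, deriv (deriv (Lo {d})) 0) := by
  have hl := side_lemma D Dl f y Lo hLo
    (fun d₁ h₁ d₂ h₂ h => (hsep d₁ h₁ d₂ h₂ h).1)
  have hr := side_lemma D Dr f y Lo hLo
    (fun d₁ h₁ d₂ h₂ h => (hsep d₁ h₁ d₂ h₂ h).2)
  exact ⟨hl.1, hl.2, hr.1, hr.2⟩
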